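/- Let δ be an ordinal, d ≥ 3, n ≥ 0, and N = (n+1)(d−1)+1. Suppose u₁, …, u_N are distinct nonzero vectors of ℝ^d, and A₁, …, A_N ⊆ ℝ^d satisfy: for all p ∈ ℝ^d and all 1 ≤ k ≤ N, the set H_{u_k}(p) ∩ A_k has cardinality < ℵ_δ. If 2^ℵ₀ > ℵ_{δ+n}, then for every ε > 0 there is Z ⊆ (−ε, ε)^d of cardinality ℵ_{δ+n+1} such that for all p ∈ ℝ^d the translate p + Z is not contained in A₁ ∪ ⋯ ∪ A_N. -/

import Mathlib

open Cardinal

/-- `Hplane u p` is the hyperplane through `p` orthogonal to `u`. -/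
def Hplane {d : ℕ} (u p : EuclideanSpace ℝ (Fin d)) : Set (EuclideanSpace ℝ (Fin d)) :=
  {x | (inner ℝ (x - p) u : ℝ) = 0}

-- finite union of small sets is small
lemma aux_mk_iUnion_lt {α ι : Type} [Fintype ι] {κ : Cardinal} (hκ : ℵ₀ ≤ κ)
    {S : ι → Set α} (h : ∀ i, Cardinal.mk (S i) < κ) : Cardinal.mk (⋃ i, S i) < κ := by
  classical
  have key : ∀ s : Finset ι, Cardinal.mk (⋃ i ∈ s, S i) < κ := by
    intro s
    induction s using Finset.induction_on with
    | empty => simpa using lt_of_lt_of_le aleph0_pos hκ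
    | insert a s hni ih =>
        rw [Finset.set_biUnion_insert]
        exact lt_of_le_of_lt (Cardinal.mk_union_le _ _) (Cardinal.add_lt_of_lt hκ (h a) ih)
  have := key Finset.univ
  simpa using this

-- slices of A along a hyperplane direction are small
lemma aux_slice {d : ℕ} {δ : Ordinal} {u w : EuclideanSpace ℝ (Fin d)}
    {A : Set (EuclideanSpace ℝ (Fin d))}
    (hw : w ≠ 0) (horth : (inner ℝ u w : ℝ) = 0)
    (hA : ∀ p, Cardinal.mk (Hplane u p ∩ A : Set (EuclideanSpace ℝ (Fin d))) < aleph δ)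
    (p c : EuclideanSpace ℝ (Fin d)) :
    Cardinal.mk {s : ℝ | p + s • w + c ∈ A} < aleph δ := by
  refine lt_of_le_of_lt ?_ (hA (p + c))
  have hmem : ∀ s : {s : ℝ // p + s • w + c ∈ A},
      p + (s : ℝ) • w + c ∈ Hplane u (p + c) ∩ A := by
    rintro ⟨s, hs⟩
    refine ⟨?_, hs⟩
    show (inner ℝ ((p + s • w + c) - (p + c)) u : ℝ) = 0
    have : (p + s • w + c) - (p + c) = s • w := by abel
    rw [this, real_inner_smul_left, real_inner_comm, horth, mul_zero]
  refine Cardinal.mk_le_of_injective (f := fun s => ⟨p + (s : ℝ) • w + c, hmem s⟩) ?_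
  rintro ⟨s₁, h₁⟩ ⟨s₂, h₂⟩ h
  have h' : p + s₁ • w + c = p + s₂ • w + c := congrArg Subtype.val h
  have hsw : s₁ • w = s₂ • w := by
    have h2 := congrArg (fun x => x - (p + c)) h'
    simpa [show (p + s₁ • w + c) - (p + c) = s₁ • w from by abel,
      show (p + s₂ • w + c) - (p + c) = s₂ • w from by abel] using h2
  ext1
  exact smul_left_injective ℝ hw hsw

-- cardinality of the grid
lemma aux_grid {δ : Ordinal} (T : ℕ → Set ℝ) (m : ℕ)
    (hT : ∀ j < m + 1, Cardinal.mk (T j) = aleph (δ + j)) :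
    Cardinal.mk (∀ j : Fin (m + 1), T (j : ℕ)) ≤ aleph (δ + m) := by
  rw [Cardinal.mk_pi]
  calc Cardinal.prod (fun j : Fin (m + 1) => Cardinal.mk (T (j : ℕ)))
      ≤ Cardinal.prod (fun _ : Fin (m + 1) => aleph (δ + m)) := by
        refine Cardinal.prod_le_prod _ _ fun j => ?_
        rw [hT j j.isLt]
        exact aleph_le_aleph.2 (add_le_add_right (by exact_mod_cast Nat.lt_succ_iff.1 j.isLt) δ)
    _ = aleph (δ + m) ^ (Cardinal.mk (Fin (m + 1))) := Cardinal.prod_const' _ _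
    _ ≤ aleph (δ + m) := by
        rw [Cardinal.mk_fin]
        exact Cardinal.power_nat_le (aleph0_le_aleph _)

-- the key inductive lemma
lemma aux_key {d N : ℕ} (δ : Ordinal) (u : Fin N → EuclideanSpace ℝ (Fin d))
    (A : Fin N → Set (EuclideanSpace ℝ (Fin d)))
    (hA : ∀ (p : EuclideanSpace ℝ (Fin d)) (k : Fin N),
      Cardinal.mk (Hplane (u k) p ∩ A k : Set (EuclideanSpace ℝ (Fin d))) < aleph δ)
    (g : Fin N → ℕ) (v : ℕ → EuclideanSpace ℝ (Fin d)) (T : ℕ → Set ℝ) :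
    ∀ m : ℕ, (∀ j < m, v j ≠ 0) → (∀ j < m, Cardinal.mk (T j) = aleph (δ + j)) →
      (∀ k, g k < m → (inner ℝ (u k) (v (g k)) : ℝ) = 0) →
      ∀ p : EuclideanSpace ℝ (Fin d), ∃ t : ℕ → ℝ, (∀ j < m, t j ∈ T j) ∧
        ∀ k, g k < m → p + ∑ j ∈ Finset.range m, t j • v j ∉ A k := by
  intro m
  induction m with
  | zero =>
      intro _ _ _ p
      exact ⟨fun _ => 0, fun j hj => absurd hj (Nat.not_lt_zero j),
        fun k hk => absurd hk (Nat.not_lt_zero _)⟩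
  | succ m ih =>
      intro hv hT hg p
      classical
      -- the bad sets
      set bad : Fin N → Set ℝ := fun k =>
        {s : ℝ | ∃ tt : (∀ j : Fin m, T (j : ℕ)),
          p + s • v m + (∑ j : Fin m, (tt j : ℝ) • v (j : ℕ)) ∈ A k} with hbad_def
      have hslice : ∀ k, g k = m → ∀ c, Cardinal.mk {s : ℝ | p + s • v m + c ∈ A k} < aleph δ := by
        intro k hk c
        refine aux_slice (hv m (Nat.lt_succ_self m)) ?_ (fun q => hA q k) p c
        have := hg k (by rw [hk]; exact Nat.lt_succ_self m)
        rwa [hk] at this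
      have hbadcard : ∀ k, g k = m → Cardinal.mk (bad k) < aleph (δ + m) := by
        intro k hk
        rcases m with _ | m'
        · -- m = 0 : the grid is trivial
          have he : bad k = {s : ℝ | p + s • v 0 + 0 ∈ A k} := by
            ext s
            simp only [hbad_def, Set.mem_setOf_eq]
            constructor
            · rintro ⟨tt, htt⟩
              simpa using htt
            · intro hs
              exact ⟨fun j => j.elim0, by simpa using hs⟩
          rw [he]
          simpa using hslice k hk 0
        · -- m = m' + 1
          have he : bad k = ⋃ tt : (∀ j : Fin (m' + 1), T (j : ℕ)),
              {s : ℝ | p + s • v (m' + 1) + (∑ j : Fin (m' + 1), (tt j : ℝ) • v (j : ℕ)) ∈ A k} :=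
            Set.setOf_exists _
          rw [he]
          have h1 : Cardinal.mk (⋃ tt : (∀ j : Fin (m' + 1), T (j : ℕ)),
              {s : ℝ | p + s • v (m' + 1) + (∑ j : Fin (m' + 1), (tt j : ℝ) • v (j : ℕ)) ∈ A k})
              ≤ Cardinal.sum (fun _ : (∀ j : Fin (m' + 1), T (j : ℕ)) => aleph δ) := by
            refine le_trans Cardinal.mk_iUnion_le_sum_mk (Cardinal.sum_le_sum _ _ fun tt => ?_)
            exact le_of_lt (hslice k hk _)
          rw [Cardinal.sum_const'] at h1
          have h2 : Cardinal.mk (∀ j : Fin (m' + 1), T (j : ℕ)) ≤ aleph (δ + m') :=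
            aux_grid T m' (fun j hj => hT j (hj.trans (Nat.lt_succ_self _)))
          have h3 : Cardinal.mk (∀ j : Fin (m' + 1), T (j : ℕ)) * aleph δ
              ≤ aleph (δ + m') * aleph (δ + m') := by
            refine mul_le_mul' h2 (aleph_le_aleph.2 (le_self_add))
          rw [Cardinal.mul_eq_self (aleph0_le_aleph _)] at h3
          refine lt_of_le_of_lt (h1.trans h3) (aleph_lt_aleph.2 ?_)
          exact (add_lt_add_iff_left δ).2 (by exact_mod_cast Nat.lt_succ_self m')
      -- pick a good s in T m
      set badU : Fin N → Set ℝ := fun k => if g k = m then bad k else ∅ with hbadU_def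
      have hbigcard : Cardinal.mk (⋃ k, badU k) < aleph (δ + m) := by
        refine aux_mk_iUnion_lt (aleph0_le_aleph _) fun k => ?_
        by_cases hk : g k = m
        · simpa [hbadU_def, hk] using hbadcard k hk
        · simp [hbadU_def, hk]
          exact lt_of_lt_of_le aleph0_pos (aleph0_le_aleph _)
      have hTm : Cardinal.mk (T m) = aleph (δ + m) := hT m (Nat.lt_succ_self m)
      have hnotsub : ¬ (T m ⊆ ⋃ k, badU k) := by
        intro hsub
        have := Cardinal.mk_le_mk_of_subset hsub
        rw [hTm] at this
        exact absurd this (not_le.2 hbigcard)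
      obtain ⟨s, hsT, hsnot⟩ := Set.not_subset.1 hnotsub
      have hgood : ∀ k, g k = m → s ∉ bad k := by
        intro k hk hmem
        exact hsnot (Set.mem_iUnion.2 ⟨k, by simp [hbadU_def, hk, hmem]⟩)
      -- apply induction hypothesis
      obtain ⟨t, htmem, htnot⟩ := ih (fun j hj => hv j (hj.trans (Nat.lt_succ_self m)))
        (fun j hj => hT j (hj.trans (Nat.lt_succ_self m)))
        (fun k hk => hg k (hk.trans (Nat.lt_succ_self m))) (p + s • v m)
      refine ⟨fun j => if j = m then s else t j, ?_, ?_⟩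
      · intro j hj
        by_cases h : j = m
        · simpa [h] using hsT
        · simpa [h] using htmem j (by omega)
      · intro k hk
        have hsum : ∑ j ∈ Finset.range (m + 1), (if j = m then s else t j) • v j
            = s • v m + ∑ j ∈ Finset.range m, t j • v j := by
          rw [Finset.sum_range_succ]
          have : ∀ j ∈ Finset.range m, (if j = m then s else t j) • v j = t j • v j := by
            intro j hj
            have : j ≠ m := (Finset.mem_range.1 hj).ne
            simp [this]
          rw [Finset.sum_congr rfl this]
          simp [add_comm]
        rw [hsum]
        have hpt : p + (s • v m + ∑ j ∈ Finset.range m, t j • v j)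
            = (p + s • v m) + ∑ j ∈ Finset.range m, t j • v j := by abel
        rw [hpt]
        rcases Nat.lt_succ_iff_lt_or_eq.1 hk with h | h
        · exact htnot k h
        · intro hmem
          refine hgood k h ⟨fun j => ⟨t j, htmem j j.isLt⟩, ?_⟩
          have : ∑ j : Fin m, (t j : ℝ) • v (j : ℕ) = ∑ j ∈ Finset.range m, t j • v j :=
            (Finset.sum_range (fun j => t j • v j)).symm
          rw [this]
          exact by
            have : (p + s • v m) + ∑ j ∈ Finset.range m, t j • v j
                = p + s • v m + ∑ j ∈ Finset.range m, t j • v j := by abel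
            rwa [this] at hmem

-- existence of a nonzero vector orthogonal to each group of at most d-1 vectors
lemma aux_vec {d N : ℕ} (hd : 3 ≤ d) (u : Fin N → EuclideanSpace ℝ (Fin d)) (j : ℕ) :
    ∃ v : EuclideanSpace ℝ (Fin d), v ≠ 0 ∧
      ∀ k : Fin N, (k : ℕ) / (d - 1) = j → (inner ℝ (u k) v : ℝ) = 0 := by
  classical
  have hd1 : 0 < d - 1 := by omega
  set w : Fin (d - 1) → EuclideanSpace ℝ (Fin d) := fun i =>
    if h : j * (d - 1) + (i : ℕ) < N then u ⟨j * (d - 1) + (i : ℕ), h⟩ else 0 with hw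
  set V := Submodule.span ℝ (Set.range w) with hVdef
  have hfr : Module.finrank ℝ V ≤ d - 1 := by
    refine le_trans (finrank_range_le_card w) ?_
    simp
  have hVne : V ≠ ⊤ := by
    intro h
    rw [h, finrank_top, finrank_euclideanSpace_fin] at hfr
    omega
  have hne : Vᗮ ≠ ⊥ := fun h => hVne (Submodule.orthogonal_eq_bot_iff.1 h)
  obtain ⟨v, hvV, hv0⟩ := (Submodule.ne_bot_iff _).1 hne
  refine ⟨v, hv0, ?_⟩
  intro k hk
  have h1 := Nat.div_add_mod (k : ℕ) (d - 1)
  rw [hk, mul_comm] at h1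
  have hku : u k ∈ Set.range w := by
    refine ⟨⟨(k : ℕ) % (d - 1), Nat.mod_lt _ hd1⟩, ?_⟩
    show (if h : j * (d - 1) + ((k : ℕ) % (d - 1)) < N then
      u ⟨j * (d - 1) + ((k : ℕ) % (d - 1)), h⟩ else 0) = u k
    rw [dif_pos (by rw [h1]; exact k.isLt)]
    have hfin : (⟨j * (d - 1) + ((k : ℕ) % (d - 1)), by rw [h1]; exact k.isLt⟩ : Fin N) = k :=
      Fin.val_injective h1
    rw [hfin]
  exact (Submodule.mem_orthogonal V v).1 hvV (u k) (Submodule.subset_span hku)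

lemma aux_coord {d : ℕ} (x : EuclideanSpace ℝ (Fin d)) (i : Fin d) : |x i| ≤ ‖x‖ := by
  rw [EuclideanSpace.norm_eq]
  have h1 : |x i| = Real.sqrt (‖x i‖ ^ 2) := by
    rw [Real.sqrt_sq_eq_abs]
    simp [Real.norm_eq_abs, abs_abs]
  rw [h1]
  apply Real.sqrt_le_sqrt
  exact Finset.single_le_sum (f := fun j => ‖x j‖ ^ 2) (fun j _ => sq_nonneg _)
    (Finset.mem_univ i)

theorem stmt13 (δ : Ordinal) (d n : ℕ) (hd : 3 ≤ d)
    (u : Fin ((n + 1) * (d - 1) + 1) → EuclideanSpace ℝ (Fin d))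
    (hu : ∀ k, u k ≠ 0) (huinj : Function.Injective u)
    (A : Fin ((n + 1) * (d - 1) + 1) → Set (EuclideanSpace ℝ (Fin d)))
    (hA : ∀ (p : EuclideanSpace ℝ (Fin d)) (k : Fin ((n + 1) * (d - 1) + 1)),
      Cardinal.mk (Hplane (u k) p ∩ A k : Set (EuclideanSpace ℝ (Fin d))) < aleph δ)
    (hcont : aleph (δ + n) < continuum) :
    ∀ ε : ℝ, 0 < ε →
      ∃ Z : Set (EuclideanSpace ℝ (Fin d)),
        (∀ z ∈ Z, ∀ i, |z i| < ε) ∧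
        Cardinal.mk Z = aleph (δ + n + 1) ∧
        ∀ p : EuclideanSpace ℝ (Fin d), ¬ (p + ·) '' Z ⊆ ⋃ k, A k := by
  classical
  intro ε hε
  set κ : Cardinal := aleph (δ + n + 1) with hκdef
  have hord : (δ + ((n + 1 : ℕ) : Ordinal)) = δ + n + 1 := by
    rw [Nat.cast_succ, ← add_assoc]
  have hκaleph : κ = aleph (δ + ((n + 1 : ℕ) : Ordinal)) := by rw [hord]
  have hκcont : κ ≤ continuum := by
    rw [hκdef, Ordinal.add_one_eq_succ, aleph_succ]
    exact Order.succ_le_of_lt hcont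
  have hmono : ∀ j : ℕ, j < n + 2 → aleph (δ + j) ≤ κ := by
    intro j hj
    rw [hκaleph]
    exact aleph_le_aleph.2 (add_le_add_right (by exact_mod_cast Nat.lt_succ_iff.1 hj) δ)
  -- grouping
  set g : Fin ((n + 1) * (d - 1) + 1) → ℕ := fun k => (k : ℕ) / (d - 1) with hg
  have hd1 : 0 < d - 1 := by omega
  have hg2 : ∀ k, g k < n + 2 := by
    intro k
    have h1 : (k : ℕ) ≤ (n + 1) * (d - 1) := Nat.lt_succ_iff.1 k.isLt
    have h2 : (k : ℕ) / (d - 1) ≤ (n + 1) * (d - 1) / (d - 1) := Nat.div_le_div_right h1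
    rw [Nat.mul_div_cancel _ hd1] at h2
    show (k : ℕ) / (d - 1) < n + 2
    exact Nat.lt_succ_of_le h2
  -- orthogonal direction vectors
  choose v₀ hv₀ne hv₀orth using fun j => aux_vec hd u j
  set c₀ : ℝ := ε / (2 * (n + 2)) with hc₀def
  have hc₀ : 0 < c₀ := div_pos hε (by positivity)
  set v : ℕ → EuclideanSpace ℝ (Fin d) := fun j => (c₀ / ‖v₀ j‖) • v₀ j with hv
  have hvne : ∀ j, v j ≠ 0 := fun j =>
    smul_ne_zero (div_ne_zero hc₀.ne' (norm_ne_zero_iff.2 (hv₀ne j))) (hv₀ne j)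
  have hvnorm : ∀ j, ‖v j‖ = c₀ := by
    intro j
    rw [hv]
    simp only [norm_smul, Real.norm_eq_abs]
    rw [abs_of_pos (div_pos hc₀ (norm_pos_iff.2 (hv₀ne j))), div_mul_cancel₀ _ (norm_ne_zero_iff.2 (hv₀ne j))]
  have hvorth : ∀ k, (inner ℝ (u k) (v (g k)) : ℝ) = 0 := by
    intro k
    rw [hv]
    simp only [real_inner_smul_right]
    rw [hv₀orth (g k) k rfl, mul_zero]
  -- the scalar sets
  have hTex : ∀ j : ℕ, ∃ S : Set ℝ, j < n + 2 →
      S ⊆ Set.Ioo (0 : ℝ) 1 ∧ Cardinal.mk S = aleph (δ + j) := by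
    intro j
    by_cases hj : j < n + 2
    · have hle : aleph (δ + j) ≤ Cardinal.mk (Set.Ioo (0 : ℝ) 1) := by
        rw [Cardinal.mk_Ioo_real zero_lt_one]
        exact (hmono j hj).trans hκcont
      obtain ⟨S, hS1, hS2⟩ := Cardinal.le_mk_iff_exists_subset.1 hle
      exact ⟨S, fun _ => ⟨hS1, hS2⟩⟩
    · exact ⟨∅, fun h => absurd h hj⟩
  choose T hT using hTex
  have hT' : ∀ j < n + 2, Cardinal.mk (T j) = aleph (δ + j) := fun j hj => (hT j hj).2
  -- the key lemma
  have hkey := aux_key δ u A hA g v T (n + 2) (fun j _ => hvne j) hT' (fun k _ => hvorth k)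
  -- the grid part of Z
  set Z₀ : Set (EuclideanSpace ℝ (Fin d)) :=
    Set.range (fun tt : (∀ j : Fin (n + 2), T (j : ℕ)) =>
      ∑ j : Fin (n + 2), (tt j : ℝ) • v (j : ℕ)) with hZ₀def
  have hZ₀card : Cardinal.mk Z₀ ≤ κ := by
    refine Cardinal.mk_range_le.trans ?_
    rw [hκaleph]
    exact aux_grid T (n + 1) hT'
  have hZ₀coord : ∀ z ∈ Z₀, ∀ i, |z i| < ε := by
    rintro z ⟨tt, rfl⟩ i
    refine lt_of_le_of_lt (aux_coord _ i) ?_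
    refine lt_of_le_of_lt (norm_sum_le _ _) ?_
    have hterm : ∀ j : Fin (n + 2), ‖(tt j : ℝ) • v (j : ℕ)‖ ≤ c₀ := by
      intro j
      rw [norm_smul, Real.norm_eq_abs, hvnorm]
      have hmem := (hT (j : ℕ) j.isLt).1 (tt j).2
      have : |(tt j : ℝ)| ≤ 1 := by
        rw [abs_of_pos hmem.1]
        exact le_of_lt hmem.2
      calc |(tt j : ℝ)| * c₀ ≤ 1 * c₀ := by nlinarith [hc₀]
        _ = c₀ := one_mul c₀
    calc ∑ j : Fin (n + 2), ‖(tt j : ℝ) • v (j : ℕ)‖ ≤ ∑ _j : Fin (n + 2), c₀ :=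
          Finset.sum_le_sum fun j _ => hterm j
      _ = (n + 2 : ℕ) * c₀ := by simp [mul_comm]
      _ = ε / 2 := by
          rw [hc₀def]
          push_cast
          field_simp
      _ < ε := by linarith
  -- the padding part of Z
  set i₀ : Fin d := ⟨0, by omega⟩ with hi₀
  have hPle : κ ≤ Cardinal.mk (Set.Ioo (0 : ℝ) ε) := by
    rw [Cardinal.mk_Ioo_real hε]
    exact hκcont
  obtain ⟨P', hP'sub, hP'card⟩ := Cardinal.le_mk_iff_exists_subset.1 hPle
  set f : ℝ → EuclideanSpace ℝ (Fin d) := fun r => EuclideanSpace.single i₀ r with hf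
  have hfinj : Function.Injective f := by
    intro a b h
    have := congrArg (fun x : EuclideanSpace ℝ (Fin d) => x i₀) h
    simpa [hf, EuclideanSpace.single_apply] using this
  set P : Set (EuclideanSpace ℝ (Fin d)) := f '' P' with hP
  have hPcard : Cardinal.mk P = κ := by
    rw [hP, Cardinal.mk_image_eq hfinj, hP'card]
  have hPcoord : ∀ z ∈ P, ∀ i, |z i| < ε := by
    rintro z ⟨r, hr, rfl⟩ i
    have hr' := hP'sub hr
    have happ : (f r) i = if i = i₀ then r else 0 := by
      simp [hf, EuclideanSpace.single_apply]
    rw [happ]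
    by_cases h : i = i₀
    · rw [if_pos h, abs_of_pos hr'.1]
      exact hr'.2
    · rw [if_neg h]
      simpa using hε
  -- assemble
  refine ⟨Z₀ ∪ P, ?_, ?_, ?_⟩
  · intro z hz i
    rcases hz with hz | hz
    · exact hZ₀coord z hz i
    · exact hPcoord z hz i
  · refine le_antisymm ?_ ?_
    · refine (Cardinal.mk_union_le _ _).trans ?_
      rw [hPcard]
      calc Cardinal.mk Z₀ + κ ≤ κ + κ := by
            exact add_le_add_left hZ₀card κ
        _ = κ := Cardinal.add_eq_self (by rw [hκdef]; exact aleph0_le_aleph _)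
    · rw [← hPcard]
      exact Cardinal.mk_le_mk_of_subset Set.subset_union_right
  · intro p hsub
    obtain ⟨t, htm, htnot⟩ := hkey p
    set z : EuclideanSpace ℝ (Fin d) := ∑ j ∈ Finset.range (n + 2), t j • v j with hz
    have hzZ₀ : z ∈ Z₀ := by
      refine ⟨fun j => ⟨t j, htm j j.isLt⟩, ?_⟩
      rw [hz]
      exact (Finset.sum_range (fun j => t j • v j)).symm
    have hq : p + z ∈ (p + ·) '' (Z₀ ∪ P) := ⟨z, Or.inl hzZ₀, rfl⟩
    obtain ⟨k, hk⟩ := Set.mem_iUnion.1 (hsub hq)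
    exact htnot k (hg2 k) hk
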